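/- For a finite non-loop path w = xwy with x ≠ y, the odd moments of the self-adjoint operator L_w + L_w* vanish: E((L_w + L_w*)^{2k+1}) = 0 for all k ≥ 0, where E is the diagonal conditional expectation (equivalently, all diagonal matrix entries ⟨ξ_h, (L_w + L_w*)^{2k+1} ξ_h⟩ vanish). -/

import Mathlib

noncomputable section

/-- The graph Hilbert space `H_G = ℓ²(F⁺(G))`. -/
abbrev HG (W : Type) : Type := lp (fun _ : W => ℂ) 2

/-- The canonical orthonormal basis vector `ξ_w`. -/
noncomputable def xi {W : Type} [DecidableEq W] (w : W) : HG W := lp.single 2 w 1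

lemma inner_xi_left {W : Type} [DecidableEq W] (p : W) (v : HG W) :
    (inner ℂ (xi p) v : ℂ) = v p := by
  rw [xi, lp.inner_single_left]
  simp [RCLike.inner_apply]

lemma xi_inner_xi {W : Type} [DecidableEq W] (p q : W) :
    (inner ℂ (xi p) (xi q) : ℂ) = if q = p then 1 else 0 := by
  rw [inner_xi_left]
  by_cases h : q = p
  · subst h; simp [xi, lp.single_apply_self]
  · rw [if_neg h, xi, lp.single_apply_ne _ _ _ (Ne.symm h)]

lemma vec_ext {W : Type} [DecidableEq W] {v v' : HG W}
    (h : ∀ p, (inner ℂ (xi p) v : ℂ) = inner ℂ (xi p) v') : v = v' := by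
  apply lp.ext
  funext p
  have := h p
  rwa [inner_xi_left, inner_xi_left] at this

theorem nonloop_path_odd_moments_vanish
    {W : Type} [DecidableEq W]
    (mul : W → W → Option W) (rng src : W → W) (len : W → ℕ)
    (w x y : W) (hwx : rng w = x) (hwy : src w = y) (hxy : x ≠ y)
    -- `w` is a genuine finite path: it has positive length,
    (hlenw : 0 < len w)
    -- and length is additive on admissible concatenations
    (hlen : ∀ a b c : W, mul a b = some c → len c = len a + len b)
    -- left cancellation for `w`
    (hinj : ∀ h₁ h₂ c : W, mul w h₁ = some c → mul w h₂ = some c → h₁ = h₂)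
    (Lw : HG W →L[ℂ] HG W)
    (hLw : ∀ h : W, Lw (xi h) = (mul w h).elim 0 xi) :
    ∀ (k : ℕ) (h : W),
      (inner ℂ (xi h) (((Lw + ContinuousLinearMap.adjoint Lw) ^ (2 * k + 1)) (xi h)) : ℂ)
        = 0 := by
  classical
  set A := Lw + ContinuousLinearMap.adjoint Lw with hA
  set dv : W → Option W := fun g => if h : ∃ p, mul w p = some g then some h.choose else none
    with hdv
  have hdv_some : ∀ g q : W, dv g = some q → mul w q = some g := by
    intro g q hd
    by_cases he : ∃ p, mul w p = some g
    · simp only [hdv] at hd; rw [dif_pos he, Option.some_inj] at hd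
      rw [← hd]; exact he.choose_spec
    · simp only [hdv] at hd; rw [dif_neg he] at hd; exact nomatch hd
  have hdv_none : ∀ g : W, dv g = none → ∀ p, mul w p ≠ some g := by
    intro g hd p hp
    by_cases he : ∃ p, mul w p = some g
    · simp only [hdv] at hd; rw [dif_pos he] at hd; exact nomatch hd
    · exact he ⟨p, hp⟩
  have hadj : ∀ g : W, ContinuousLinearMap.adjoint Lw (xi g) = (dv g).elim 0 xi := by
    intro g
    apply vec_ext
    intro p
    rw [ContinuousLinearMap.adjoint_inner_right, hLw p]
    rcases hm : mul w p with _ | c <;> rcases hd : dv g with _ | q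
    · simp
    · rw [Option.elim_none, Option.elim_some, inner_zero_left, xi_inner_xi]
      rw [if_neg]
      intro hqp
      have := hdv_some g q hd
      rw [hqp, hm] at this
      exact nomatch this
    · rw [Option.elim_none, Option.elim_some, inner_zero_right, xi_inner_xi]
      rw [if_neg]
      intro hgc
      exact hdv_none g hd p (by rw [hm, hgc])
    · rw [Option.elim_some, Option.elim_some, xi_inner_xi, xi_inner_xi]
      have hq : mul w q = some g := hdv_some g q hd
      by_cases hgc : g = c
      · rw [if_pos hgc, if_pos (hinj q p c (hgc ▸ hq) hm)]
      · rw [if_neg hgc, if_neg]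
        intro hqp
        rw [hqp, hm, Option.some_inj] at hq
        exact hgc hq.symm
  have hAsa : ContinuousLinearMap.adjoint A = A := by
    rw [hA, map_add, ContinuousLinearMap.adjoint_adjoint, add_comm]
  have key : ∀ (n : ℕ) (g h : W),
      (inner ℂ (xi g) ((A ^ n) (xi h)) : ℂ) ≠ 0 →
      ∃ m : ℤ, (len g : ℤ) = len h + m * len w ∧ m % 2 = (n : ℤ) % 2 := by
    intro n
    induction n with
    | zero =>
      intro g h hne
      rw [pow_zero, ContinuousLinearMap.one_apply, xi_inner_xi] at hne
      split_ifs at hne with hgh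
      · exact ⟨0, by rw [hgh]; push_cast; ring_nf, by simp⟩
      · exact absurd rfl hne
    | succ n ih =>
      intro g h hne
      rw [pow_succ', ContinuousLinearMap.mul_apply,
        ← ContinuousLinearMap.adjoint_inner_left, hAsa] at hne
      rw [hA, ContinuousLinearMap.add_apply, inner_add_left, hLw g, hadj g] at hne
      rcases (by
          by_contra hc; push_neg at hc
          rw [hc.1, hc.2, add_zero] at hne; exact hne rfl :
          (inner ℂ ((mul w g).elim 0 xi) ((A ^ n) (xi h)) : ℂ) ≠ 0 ∨
          (inner ℂ ((dv g).elim 0 xi) ((A ^ n) (xi h)) : ℂ) ≠ 0) with h1 | h1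
      · rcases hm : mul w g with _ | c
        · rw [hm, Option.elim_none, inner_zero_left] at h1; exact absurd rfl h1
        · rw [hm, Option.elim_some] at h1
          obtain ⟨m, hm1, hm2⟩ := ih c h h1
          have hc : (len c : ℤ) = len w + len g := by exact_mod_cast hlen w g c hm
          have hr : (m - 1) * (len w : ℤ) = m * len w - len w := by ring
          exact ⟨m - 1, by omega, by omega⟩
      · rcases hd : dv g with _ | q
        · rw [hd, Option.elim_none, inner_zero_left] at h1; exact absurd rfl h1
        · rw [hd, Option.elim_some] at h1
          obtain ⟨m, hm1, hm2⟩ := ih q h h1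
          have hq : mul w q = some g := hdv_some g q hd
          have hc : (len g : ℤ) = len w + len q := by exact_mod_cast hlen w q g hq
          have hr : (m + 1) * (len w : ℤ) = m * len w + len w := by ring
          exact ⟨m + 1, by omega, by omega⟩
  intro k h
  by_contra hne
  obtain ⟨m, hm1, hm2⟩ := key (2 * k + 1) h h hne
  have hw : (0 : ℤ) < len w := by exact_mod_cast hlenw
  have hz : m * (len w : ℤ) = 0 := by omega
  have hm0 : m = 0 := by
    rcases mul_eq_zero.mp hz with h' | h'
    · exact h'
    · omega
  have : ((2 * k + 1 : ℕ) : ℤ) % 2 = 1 := by push_cast; omega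
  omega
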